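/- arXiv:2209.02513 — 2 statements merged into one kernel-verified Lean document; each statement's English description precedes it below -/
import Mathlib

section
/- Under the stated setup and algorithmic hypotheses, for every k ≥ 0: f(A^{k+1}, Z^{k+1}, H^{k+1}) ≤ f(A^k, Z^k, H^k) − (λ/2)‖A^{k+1} − A^k‖² − (λ/2)‖Z^{k+1} − Z^k‖². In particular, the sequence f(A^k, Z^k, H^k) is monotonically decreasing. -/
open Matrix BigOperators Filter Topology

/-- Frobenius norm of a real matrix. -/
noncomputable def frob {m n : ℕ} (W : Matrix (Fin m) (Fin n) ℝ) : ℝ :=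
  Real.sqrt (∑ i, ∑ j, (W i j) ^ 2)

/-- Laplacian `L_S = D_S - (|S| + |S|ᵀ)/2` of a square real matrix `S`. -/
noncomputable def lap {n : ℕ} (S : Matrix (Fin n) (Fin n) ℝ) : Matrix (Fin n) (Fin n) ℝ :=
  Matrix.diagonal (fun i => ∑ j, (|S i j| + |S j i|) / 2)
    - (1 / 2 : ℝ) • (S.map (fun x => |x|) + (S.map (fun x => |x|))ᵀ)

/-- The objective `f(A, Z, H)` of the penalized DGSL model. -/
noncomputable def fObj {n k d : ℕ} (X : Matrix (Fin d) (Fin n) ℝ)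
    (W M C : Matrix (Fin n) (Fin n) ℝ) (lam lamZ lamM a1 a2 : ℝ)
    (A Z : Matrix (Fin n) (Fin n) ℝ) (H : Matrix (Fin k) (Fin n) ℝ) : ℝ :=
  (1 / 2) * frob (X - X * A) ^ 2 + (lam / 2) * frob (A - Z) ^ 2
    + lamZ * (∑ i, ∑ j, |Z i j|)
    + a1 * trace (H * lap Z * Hᵀ) / trace (H * lap C * Hᵀ)
    + a2 * trace (H * (lap W + lamM • lap M) * Hᵀ) / trace (H * lap C * Hᵀ)

noncomputable def ssq {m n : ℕ} (W : Matrix (Fin m) (Fin n) ℝ) : ℝ := ∑ i, ∑ j, (W i j)^2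

lemma ssq_nonneg {m n : ℕ} (W : Matrix (Fin m) (Fin n) ℝ) : 0 ≤ ssq W := by
  unfold ssq; positivity

lemma frob_sq {m n : ℕ} (W : Matrix (Fin m) (Fin n) ℝ) : frob W ^ 2 = ssq W := by
  unfold frob ssq; exact Real.sq_sqrt (by positivity)

lemma ssq_combo {m n : ℕ} (t : ℝ) (U V : Matrix (Fin m) (Fin n) ℝ) :
    ssq (t • U + (1-t) • V) = t * ssq U + (1-t) * ssq V - t*(1-t) * ssq (U - V) := by
  have h : ∀ i j, ((t • U + (1-t) • V) i j)^2
      = t*(U i j)^2 + (1-t)*(V i j)^2 - t*(1-t)*((U - V) i j)^2 := by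
    intro i j
    simp only [Matrix.add_apply, Matrix.smul_apply, Matrix.sub_apply, smul_eq_mul]
    ring
  simp only [ssq, h, Finset.sum_sub_distrib, Finset.sum_add_distrib, ← Finset.mul_sum]

lemma ssq_neg_sub {m n : ℕ} (U V : Matrix (Fin m) (Fin n) ℝ) : ssq (U - V) = ssq (V - U) := by
  unfold ssq
  congr 1; ext i; congr 1; ext j
  simp only [Matrix.sub_apply]; ring

lemma abs_combo (t a b : ℝ) (ht0 : 0 ≤ t) (ht1 : t ≤ 1) :
    |t * a + (1-t) * b| ≤ t * |a| + (1-t) * |b| := by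
  calc |t * a + (1-t) * b| ≤ |t * a| + |(1-t) * b| := abs_add_le _ _
    _ = t * |a| + (1-t) * |b| := by
        rw [abs_mul, abs_mul, abs_of_nonneg ht0,
          abs_of_nonneg (show (0:ℝ) ≤ 1 - t by linarith)]

lemma limit_trick (a b c : ℝ) (h : ∀ t : ℝ, 0 ≤ t → t < 1 → a + c * t ≤ b) :
    a + c ≤ b := by
  by_contra hcon
  push_neg at hcon
  have h0 := h 0 le_rfl one_pos
  rw [mul_zero, add_zero] at h0
  have hcpos : 0 < c := by nlinarith
  have hd : 0 < (a + c - b)/(2*c) := div_pos (by linarith) (by positivity)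
  have ht0 : (0:ℝ) ≤ 1 - (a + c - b)/(2*c) := by
    have : (a + c - b)/(2*c) ≤ 1 := by
      rw [div_le_one (by positivity)]; nlinarith
    linarith
  have ht := h _ ht0 (by linarith)
  have hx : c * (1 - (a+c-b)/(2*c)) = c - (a+c-b)/2 := by field_simp
  rw [hx] at ht; linarith

lemma sum_key (n : ℕ) (G B : Fin n → Fin n → ℝ) (hG : ∀ i j, G i j = G j i) :
    (∑ i, G i i * (∑ l, (B i l + B l i)/2)) - ∑ i, ∑ j, G i j * ((1/2)*(B j i + B i j))
      = ∑ i, ∑ j, B i j * ((1/2)*(G i i + G j j - 2 * G i j)) := by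
  have e1 : ∑ i, G i i * (∑ l, (B i l + B l i)/2)
      = (∑ i, ∑ l, G i i * (B i l / 2)) + ∑ i, ∑ l, G i i * (B l i / 2) := by
    rw [← Finset.sum_add_distrib]
    congr 1; ext i
    rw [Finset.mul_sum, ← Finset.sum_add_distrib]
    congr 1; ext l; ring
  have e2 : (∑ i, ∑ l, G i i * (B l i / 2)) = ∑ i, ∑ l, G l l * (B i l / 2) := by
    rw [Finset.sum_comm]
  have e3 : ∑ i, ∑ j, G i j * ((1/2)*(B j i + B i j))
      = (∑ i, ∑ j, G i j * (B j i / 2)) + ∑ i, ∑ j, G i j * (B i j / 2) := by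
    rw [← Finset.sum_add_distrib]
    congr 1; ext i
    rw [← Finset.sum_add_distrib]
    congr 1; ext j; ring
  have e4 : (∑ i, ∑ j, G i j * (B j i / 2)) = ∑ i, ∑ j, G i j * (B i j / 2) := by
    rw [Finset.sum_comm]
    congr 1; ext j; congr 1; ext i; rw [hG]
  rw [e1, e2, e3, e4]
  rw [← Finset.sum_add_distrib, ← Finset.sum_add_distrib, ← Finset.sum_sub_distrib]
  congr 1; ext i
  rw [← Finset.sum_add_distrib, ← Finset.sum_add_distrib, ← Finset.sum_sub_distrib]
  congr 1; ext j; ring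

lemma trace_lap_eq {n k : ℕ} (H : Matrix (Fin k) (Fin n) ℝ) (S : Matrix (Fin n) (Fin n) ℝ) :
    trace (H * lap S * Hᵀ) = ∑ i, ∑ j, |S i j| * ((1/2) * ∑ p, (H p i - H p j)^2) := by
  have h1 : trace (H * lap S * Hᵀ) = trace ((Hᵀ * H) * lap S) := by
    rw [Matrix.trace_mul_comm, ← Matrix.mul_assoc]
  set G : Matrix (Fin n) (Fin n) ℝ := Hᵀ * H with hGdef
  have hGsym : ∀ i j, G i j = G j i := by
    intro i j
    simp [hGdef, Matrix.mul_apply, Matrix.transpose_apply, mul_comm]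
  have hsq : ∀ i j, ∑ p, (H p i - H p j)^2 = G i i + G j j - 2 * G i j := by
    intro i j
    have : ∀ p, (H p i - H p j)^2
        = H p i * H p i + H p j * H p j - 2 * (H p i * H p j) := by intro p; ring
    simp only [this, Finset.sum_sub_distrib, Finset.sum_add_distrib, ← Finset.mul_sum,
      hGdef, Matrix.mul_apply, Matrix.transpose_apply]
  have h2 : trace (G * lap S)
      = (∑ i, G i i * (∑ l, (|S i l| + |S l i|)/2))
        - ∑ i, ∑ j, G i j * ((1/2)*(|S j i| + |S i j|)) := by
    rw [← Finset.sum_sub_distrib]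
    simp only [Matrix.trace, Matrix.diag, Matrix.mul_apply]
    congr 1; ext i
    have h3 : ∀ j, G i j * lap S j i
        = (if j = i then G i j * (∑ l, (|S j l| + |S l j|)/2) else 0)
          - G i j * ((1/2)*(|S j i| + |S i j|)) := by
      intro j
      simp only [lap, Matrix.sub_apply, Matrix.diagonal_apply, Matrix.smul_apply,
        Matrix.add_apply, Matrix.map_apply, Matrix.transpose_apply, smul_eq_mul]
      by_cases hij : j = i
      · simp [hij]; ring
      · simp [hij]
    simp only [h3, Finset.sum_sub_distrib, Finset.sum_ite_eq' Finset.univ i,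
      Finset.mem_univ, if_true]
  rw [h1, h2, sum_key n (fun i j => G i j) (fun i j => |S i j|) hGsym]
  congr 1; ext i; congr 1; ext j
  rw [hsq]

lemma trace_lap_combo {n k : ℕ} (H : Matrix (Fin k) (Fin n) ℝ)
    (Z1 Z2 : Matrix (Fin n) (Fin n) ℝ) (t : ℝ) (ht0 : 0 ≤ t) (ht1 : t ≤ 1) :
    trace (H * lap (t • Z1 + (1-t) • Z2) * Hᵀ)
      ≤ t * trace (H * lap Z1 * Hᵀ) + (1-t) * trace (H * lap Z2 * Hᵀ) := by
  rw [trace_lap_eq, trace_lap_eq, trace_lap_eq, Finset.mul_sum, Finset.mul_sum,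
    ← Finset.sum_add_distrib]
  apply Finset.sum_le_sum
  intro i _
  rw [Finset.mul_sum, Finset.mul_sum, ← Finset.sum_add_distrib]
  apply Finset.sum_le_sum
  intro j _
  have hcnn : 0 ≤ (1/2 : ℝ) * ∑ p, (H p i - H p j)^2 := by positivity
  have habs : |(t • Z1 + (1-t) • Z2) i j| ≤ t * |Z1 i j| + (1-t) * |Z2 i j| := by
    simp only [Matrix.add_apply, Matrix.smul_apply, smul_eq_mul]
    exact abs_combo t _ _ ht0 ht1
  calc |(t • Z1 + (1-t) • Z2) i j| * ((1/2) * ∑ p, (H p i - H p j)^2)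
      ≤ (t * |Z1 i j| + (1-t) * |Z2 i j|) * ((1/2) * ∑ p, (H p i - H p j)^2) :=
        mul_le_mul_of_nonneg_right habs hcnn
    _ = t * (|Z1 i j| * ((1/2) * ∑ p, (H p i - H p j)^2))
        + (1-t) * (|Z2 i j| * ((1/2) * ∑ p, (H p i - H p j)^2)) := by ring

lemma step_A {n k d : ℕ} (X : Matrix (Fin d) (Fin n) ℝ) (W M C : Matrix (Fin n) (Fin n) ℝ)
    (lam lamZ lamM a1 a2 : ℝ)
    (Z : Matrix (Fin n) (Fin n) ℝ) (Hm : Matrix (Fin k) (Fin n) ℝ)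
    (A1 A2 : Matrix (Fin n) (Fin n) ℝ)
    (hmin : ∀ A, fObj X W M C lam lamZ lamM a1 a2 A1 Z Hm
      ≤ fObj X W M C lam lamZ lamM a1 a2 A Z Hm) :
    fObj X W M C lam lamZ lamM a1 a2 A1 Z Hm
      ≤ fObj X W M C lam lamZ lamM a1 a2 A2 Z Hm - (lam/2) * frob (A1 - A2)^2 := by
  rw [frob_sq]
  have key : ∀ t : ℝ, 0 ≤ t → t < 1 →
      fObj X W M C lam lamZ lamM a1 a2 A1 Z Hm + ((lam/2) * ssq (A1 - A2)) * t
        ≤ fObj X W M C lam lamZ lamM a1 a2 A2 Z Hm := by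
    intro t ht0 ht1
    have hmm := hmin (t • A1 + (1-t) • A2)
    have eA : fObj X W M C lam lamZ lamM a1 a2 (t • A1 + (1-t) • A2) Z Hm
        = t * fObj X W M C lam lamZ lamM a1 a2 A1 Z Hm
          + (1-t) * fObj X W M C lam lamZ lamM a1 a2 A2 Z Hm
          - (1/2)*(t*(1-t)) * ssq (X*A2 - X*A1)
          - (lam/2)*(t*(1-t)) * ssq (A1 - A2) := by
      have e1 : X - X * (t • A1 + (1-t) • A2)
          = t • (X - X * A1) + (1 - t) • (X - X * A2) := by
        rw [Matrix.mul_add, Matrix.mul_smul, Matrix.mul_smul]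
        ext p q
        simp only [Matrix.sub_apply, Matrix.add_apply, Matrix.smul_apply, smul_eq_mul]
        ring
      have e2 : (t • A1 + (1-t) • A2) - Z = t • (A1 - Z) + (1 - t) • (A2 - Z) := by
        ext p q
        simp only [Matrix.sub_apply, Matrix.add_apply, Matrix.smul_apply, smul_eq_mul]
        ring
      have e3 : (X - X * A1) - (X - X * A2) = X * A2 - X * A1 := by
        ext p q
        simp only [Matrix.sub_apply]
        ring
      have e4 : (A1 - Z) - (A2 - Z) = A1 - A2 := by
        ext p q
        simp only [Matrix.sub_apply]
        ring
      simp only [fObj, frob_sq]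
      rw [e1, e2, ssq_combo, ssq_combo, e3, e4]
      ring
    rw [eA] at hmm
    have h8 : 0 ≤ t * (1-t) * ssq (X*A2 - X*A1) :=
      mul_nonneg (mul_nonneg ht0 (by linarith)) (ssq_nonneg _)
    have h9 : (1-t) * (fObj X W M C lam lamZ lamM a1 a2 A1 Z Hm
        + ((lam/2) * ssq (A1 - A2)) * t - fObj X W M C lam lamZ lamM a1 a2 A2 Z Hm) ≤ 0 := by
      nlinarith [hmm, h8]
    by_contra hcc
    push_neg at hcc
    nlinarith [h9]
  have := limit_trick _ _ _ key
  linarith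

lemma step_Z {n k d : ℕ} (X : Matrix (Fin d) (Fin n) ℝ) (W M C : Matrix (Fin n) (Fin n) ℝ)
    (lam lamZ lamM a1 a2 : ℝ) (hlamZ : 0 < lamZ) (ha1 : 0 < a1)
    (A : Matrix (Fin n) (Fin n) ℝ) (Hm : Matrix (Fin k) (Fin n) ℝ)
    (hden : 0 < trace (Hm * lap C * Hmᵀ))
    (Z1 Z2 : Matrix (Fin n) (Fin n) ℝ) (hZ1 : ∀ i, Z1 i i = 0) (hZ2 : ∀ i, Z2 i i = 0)
    (hmin : ∀ Z : Matrix (Fin n) (Fin n) ℝ, (∀ i, Z i i = 0) →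
      fObj X W M C lam lamZ lamM a1 a2 A Z1 Hm ≤ fObj X W M C lam lamZ lamM a1 a2 A Z Hm) :
    fObj X W M C lam lamZ lamM a1 a2 A Z1 Hm
      ≤ fObj X W M C lam lamZ lamM a1 a2 A Z2 Hm - (lam/2) * frob (Z1 - Z2)^2 := by
  rw [frob_sq]
  have key : ∀ t : ℝ, 0 ≤ t → t < 1 →
      fObj X W M C lam lamZ lamM a1 a2 A Z1 Hm + ((lam/2) * ssq (Z1 - Z2)) * t
        ≤ fObj X W M C lam lamZ lamM a1 a2 A Z2 Hm := by
    intro t ht0 ht1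
    have hdiag : ∀ i, (t • Z1 + (1-t) • Z2) i i = 0 := by
      intro i
      simp [Matrix.add_apply, Matrix.smul_apply, hZ1 i, hZ2 i]
    have hmm := hmin (t • Z1 + (1-t) • Z2) hdiag
    -- component bounds
    have l1 : ∑ i, ∑ j, |(t • Z1 + (1-t) • Z2) i j|
        ≤ t * (∑ i, ∑ j, |Z1 i j|) + (1-t) * (∑ i, ∑ j, |Z2 i j|) := by
      rw [Finset.mul_sum, Finset.mul_sum, ← Finset.sum_add_distrib]
      apply Finset.sum_le_sum
      intro i _
      rw [Finset.mul_sum, Finset.mul_sum, ← Finset.sum_add_distrib]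
      apply Finset.sum_le_sum
      intro j _
      simp only [Matrix.add_apply, Matrix.smul_apply, smul_eq_mul]
      exact abs_combo t _ _ ht0 ht1.le
    have l1' : lamZ * (∑ i, ∑ j, |(t • Z1 + (1-t) • Z2) i j|)
        ≤ lamZ * (t * (∑ i, ∑ j, |Z1 i j|) + (1-t) * (∑ i, ∑ j, |Z2 i j|)) :=
      mul_le_mul_of_nonneg_left l1 hlamZ.le
    have l4 : a1 * trace (Hm * lap (t • Z1 + (1-t) • Z2) * Hmᵀ) / trace (Hm * lap C * Hmᵀ)
        ≤ t * (a1 * trace (Hm * lap Z1 * Hmᵀ) / trace (Hm * lap C * Hmᵀ))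
          + (1-t) * (a1 * trace (Hm * lap Z2 * Hmᵀ) / trace (Hm * lap C * Hmᵀ)) := by
      have h := trace_lap_combo Hm Z1 Z2 t ht0 ht1.le
      calc a1 * trace (Hm * lap (t • Z1 + (1-t) • Z2) * Hmᵀ) / trace (Hm * lap C * Hmᵀ)
          = (a1 / trace (Hm * lap C * Hmᵀ)) * trace (Hm * lap (t • Z1 + (1-t) • Z2) * Hmᵀ) := by
            ring
        _ ≤ (a1 / trace (Hm * lap C * Hmᵀ))
            * (t * trace (Hm * lap Z1 * Hmᵀ) + (1-t) * trace (Hm * lap Z2 * Hmᵀ)) :=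
            mul_le_mul_of_nonneg_left h (by positivity)
        _ = t * (a1 * trace (Hm * lap Z1 * Hmᵀ) / trace (Hm * lap C * Hmᵀ))
            + (1-t) * (a1 * trace (Hm * lap Z2 * Hmᵀ) / trace (Hm * lap C * Hmᵀ)) := by ring
    have e2 : ssq (A - (t • Z1 + (1-t) • Z2))
        = t * ssq (A - Z1) + (1-t) * ssq (A - Z2) - t*(1-t)*ssq (Z1 - Z2) := by
      have ea : A - (t • Z1 + (1-t) • Z2) = t • (A - Z1) + (1 - t) • (A - Z2) := by
        ext p q
        simp only [Matrix.sub_apply, Matrix.add_apply, Matrix.smul_apply, smul_eq_mul]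
        ring
      have eb : (A - Z1) - (A - Z2) = Z2 - Z1 := by
        ext p q
        simp only [Matrix.sub_apply]
        ring
      rw [ea, ssq_combo, eb, ssq_neg_sub Z2 Z1]
    have hup : fObj X W M C lam lamZ lamM a1 a2 A (t • Z1 + (1-t) • Z2) Hm
        ≤ t * fObj X W M C lam lamZ lamM a1 a2 A Z1 Hm
          + (1-t) * fObj X W M C lam lamZ lamM a1 a2 A Z2 Hm
          - (lam/2)*(t*(1-t))*ssq (Z1 - Z2) := by
      simp only [fObj, frob_sq]
      rw [e2]
      linarith [l1', l4]
    have h9 : (1-t) * (fObj X W M C lam lamZ lamM a1 a2 A Z1 Hm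
        + ((lam/2) * ssq (Z1 - Z2)) * t - fObj X W M C lam lamZ lamM a1 a2 A Z2 Hm) ≤ 0 := by
      nlinarith [hmm, hup]
    by_contra hcc
    push_neg at hcc
    nlinarith [h9]
  have := limit_trick _ _ _ key
  linarith

theorem dgsl_sufficient_decrease (n k d : ℕ) (hn : 0 < n) (hk : 0 < k) (hd : 0 < d)
    (X : Matrix (Fin d) (Fin n) ℝ) (W M C : Matrix (Fin n) (Fin n) ℝ)
    (lam lamZ lamM a1 a2 : ℝ) (hlam : 0 < lam) (hlamZ : 0 < lamZ)
    (hlamM : 0 < lamM) (ha1 : 0 < a1) (ha2 : 0 < a2)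
    (hC : ∀ H : Matrix (Fin k) (Fin n) ℝ, H * Hᵀ = 1 → 0 < trace (H * lap C * Hᵀ))
    (Aseq Zseq : ℕ → Matrix (Fin n) (Fin n) ℝ)
    (Hseq : ℕ → Matrix (Fin k) (Fin n) ℝ)
    (hZ0 : ∀ i, Zseq 0 i i = 0) (hH0 : Hseq 0 * (Hseq 0)ᵀ = 1)
    (hHstep : ∀ t : ℕ, Hseq (t + 1) * (Hseq (t + 1))ᵀ = 1 ∧
      ∀ H : Matrix (Fin k) (Fin n) ℝ, H * Hᵀ = 1 →
        fObj X W M C lam lamZ lamM a1 a2 (Aseq t) (Zseq t) (Hseq (t + 1))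
          ≤ fObj X W M C lam lamZ lamM a1 a2 (Aseq t) (Zseq t) H)
    (hAstep : ∀ (t : ℕ) (A : Matrix (Fin n) (Fin n) ℝ),
      fObj X W M C lam lamZ lamM a1 a2 (Aseq (t + 1)) (Zseq t) (Hseq (t + 1))
        ≤ fObj X W M C lam lamZ lamM a1 a2 A (Zseq t) (Hseq (t + 1)))
    (hZstep : ∀ t : ℕ, (∀ i, Zseq (t + 1) i i = 0) ∧
      ∀ Z : Matrix (Fin n) (Fin n) ℝ, (∀ i, Z i i = 0) →
        fObj X W M C lam lamZ lamM a1 a2 (Aseq (t + 1)) (Zseq (t + 1)) (Hseq (t + 1))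
          ≤ fObj X W M C lam lamZ lamM a1 a2 (Aseq (t + 1)) Z (Hseq (t + 1))) :
    (∀ t : ℕ,
      fObj X W M C lam lamZ lamM a1 a2 (Aseq (t + 1)) (Zseq (t + 1)) (Hseq (t + 1))
        ≤ fObj X W M C lam lamZ lamM a1 a2 (Aseq t) (Zseq t) (Hseq t)
          - (lam / 2) * frob (Aseq (t + 1) - Aseq t) ^ 2
          - (lam / 2) * frob (Zseq (t + 1) - Zseq t) ^ 2) ∧
    ∀ t : ℕ,
      fObj X W M C lam lamZ lamM a1 a2 (Aseq (t + 1)) (Zseq (t + 1)) (Hseq (t + 1))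
        ≤ fObj X W M C lam lamZ lamM a1 a2 (Aseq t) (Zseq t) (Hseq t) := by
  have hZdiag : ∀ t : ℕ, ∀ i, Zseq t i i = 0 := by
    intro t
    cases t with
    | zero => exact hZ0
    | succ s => exact (hZstep s).1
  have hHortho : ∀ t : ℕ, Hseq t * (Hseq t)ᵀ = 1 := by
    intro t
    cases t with
    | zero => exact hH0
    | succ s => exact (hHstep s).1
  have main : ∀ t : ℕ,
      fObj X W M C lam lamZ lamM a1 a2 (Aseq (t + 1)) (Zseq (t + 1)) (Hseq (t + 1))
        ≤ fObj X W M C lam lamZ lamM a1 a2 (Aseq t) (Zseq t) (Hseq t)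
          - (lam / 2) * frob (Aseq (t + 1) - Aseq t) ^ 2
          - (lam / 2) * frob (Zseq (t + 1) - Zseq t) ^ 2 := by
    intro t
    have hH : fObj X W M C lam lamZ lamM a1 a2 (Aseq t) (Zseq t) (Hseq (t + 1))
        ≤ fObj X W M C lam lamZ lamM a1 a2 (Aseq t) (Zseq t) (Hseq t) :=
      (hHstep t).2 (Hseq t) (hHortho t)
    have hA : fObj X W M C lam lamZ lamM a1 a2 (Aseq (t + 1)) (Zseq t) (Hseq (t + 1))
        ≤ fObj X W M C lam lamZ lamM a1 a2 (Aseq t) (Zseq t) (Hseq (t + 1))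
          - (lam/2) * frob (Aseq (t + 1) - Aseq t)^2 :=
      step_A X W M C lam lamZ lamM a1 a2 (Zseq t) (Hseq (t + 1)) (Aseq (t + 1)) (Aseq t)
        (hAstep t)
    have hZ : fObj X W M C lam lamZ lamM a1 a2 (Aseq (t + 1)) (Zseq (t + 1)) (Hseq (t + 1))
        ≤ fObj X W M C lam lamZ lamM a1 a2 (Aseq (t + 1)) (Zseq t) (Hseq (t + 1))
          - (lam/2) * frob (Zseq (t + 1) - Zseq t)^2 :=
      step_Z X W M C lam lamZ lamM a1 a2 hlamZ ha1 (Aseq (t + 1)) (Hseq (t + 1))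
        (hC (Hseq (t + 1)) (hHstep t).1) (Zseq (t + 1)) (Zseq t) (hZstep t).1 (hZdiag t)
        (hZstep t).2
    linarith
  refine ⟨main, fun t => ?_⟩
  have h1 := main t
  have h2 : 0 ≤ frob (Aseq (t + 1) - Aseq t)^2 := by rw [frob_sq]; exact ssq_nonneg _
  have h3 : 0 ≤ frob (Zseq (t + 1) - Zseq t)^2 := by rw [frob_sq]; exact ssq_nonneg _
  nlinarith [h1, h2, h3, hlam]
end

section
/- Under the stated setup and algorithmic hypotheses, the sequences {A^k}, {Z^k}, and {H^k} are bounded: there exists R > 0 such that ‖A^k‖ ≤ R, ‖Z^k‖ ≤ R, and ‖H^k‖ ≤ R for all k ≥ 0. -/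
open Matrix BigOperators Filter Topology

lemma lap_quad_nonneg {n : ℕ} (S : Matrix (Fin n) (Fin n) ℝ) (v : Fin n → ℝ) :
    0 ≤ ∑ i, ∑ j, v i * lap S i j * v j := by
  set b : Fin n → Fin n → ℝ := fun i j => (|S i j| + |S j i|) / 2 with hb
  have hbs : ∀ i j, b i j = b j i := by intro i j; simp [hb]; ring
  have hbn : ∀ i j, 0 ≤ b i j := by
    intro i j; have := abs_nonneg (S i j); have := abs_nonneg (S j i); simp [hb]; linarith
  have hlap : ∀ i j, lap S i j = (if i = j then ∑ l, b i l else 0) - b i j := by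
    intro i j
    simp [lap, Matrix.diagonal, Matrix.sub_apply, Matrix.smul_apply, Matrix.add_apply,
      Matrix.transpose_apply, Matrix.map_apply, hb]
    ring
  have h1 : ∀ i, ∑ j, v i * lap S i j * v j
      = (∑ j, b i j * v i ^ 2) - ∑ j, b i j * (v i * v j) := by
    intro i
    have hpt : ∀ j, v i * lap S i j * v j
        = v i * (if i = j then ∑ l, b i l else 0) * v j - b i j * (v i * v j) := by
      intro j; rw [hlap]; ring
    rw [Finset.sum_congr rfl fun j _ => hpt j, Finset.sum_sub_distrib]
    congr 1
    simp only [mul_ite, ite_mul, mul_zero, zero_mul, Finset.sum_ite_eq, Finset.mem_univ,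
      if_true]
    rw [Finset.mul_sum, Finset.sum_mul]
    refine Finset.sum_congr rfl (fun j _ => ?_)
    ring
  have hQ : ∑ i, ∑ j, v i * lap S i j * v j
      = (∑ i, ∑ j, b i j * v i ^ 2) - ∑ i, ∑ j, b i j * (v i * v j) := by
    rw [← Finset.sum_sub_distrib]
    exact Finset.sum_congr rfl fun i _ => h1 i
  have hswap : ∑ i, ∑ j, b i j * v j ^ 2 = ∑ i, ∑ j, b i j * v i ^ 2 := by
    rw [Finset.sum_comm]
    refine Finset.sum_congr rfl fun i _ => Finset.sum_congr rfl fun j _ => ?_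
    rw [hbs]
  have hsq : 0 ≤ ∑ i, ∑ j, b i j * (v i - v j) ^ 2 := by
    refine Finset.sum_nonneg fun i _ => Finset.sum_nonneg fun j _ => ?_
    exact mul_nonneg (hbn i j) (sq_nonneg _)
  have hexp : ∑ i, ∑ j, b i j * (v i - v j) ^ 2
      = (∑ i, ∑ j, b i j * v i ^ 2) + (∑ i, ∑ j, b i j * v j ^ 2)
        - 2 * ∑ i, ∑ j, b i j * (v i * v j) := by
    rw [← Finset.sum_add_distrib, Finset.mul_sum, ← Finset.sum_sub_distrib]
    refine Finset.sum_congr rfl fun i _ => ?_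
    rw [← Finset.sum_add_distrib, Finset.mul_sum, ← Finset.sum_sub_distrib]
    refine Finset.sum_congr rfl fun j _ => ?_
    ring
  rw [hQ]
  rw [hswap] at hexp
  linarith

lemma trace_lap_nonneg {n k : ℕ} (S : Matrix (Fin n) (Fin n) ℝ)
    (H : Matrix (Fin k) (Fin n) ℝ) : 0 ≤ trace (H * lap S * Hᵀ) := by
  have : trace (H * lap S * Hᵀ) = ∑ r, ∑ i, ∑ j, H r i * lap S i j * H r j := by
    simp only [Matrix.trace, Matrix.diag, Matrix.mul_apply, Matrix.transpose_apply,
      Finset.sum_mul]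
    exact Finset.sum_congr rfl fun r _ => Finset.sum_comm
  rw [this]
  exact Finset.sum_nonneg fun r _ => lap_quad_nonneg S (H r)

lemma frob_nonneg {m n : ℕ} (A : Matrix (Fin m) (Fin n) ℝ) : 0 ≤ frob A :=
  Real.sqrt_nonneg _

lemma frob_eq_norm {m n : ℕ} (A : Matrix (Fin m) (Fin n) ℝ) :
    frob A = ‖(WithLp.equiv 2 (Fin m × Fin n → ℝ)).symm (fun p => A p.1 p.2)‖ := by
  rw [EuclideanSpace.norm_eq, frob]
  congr 1
  rw [Fintype.sum_prod_type]
  refine Finset.sum_congr rfl fun i _ => Finset.sum_congr rfl fun j _ => ?_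
  simp [WithLp.equiv_symm_apply, Real.norm_eq_abs, sq_abs]

lemma frob_triangle_sub {m n : ℕ} (A Z : Matrix (Fin m) (Fin n) ℝ) :
    frob A ≤ frob (A - Z) + frob Z := by
  rw [frob_eq_norm, frob_eq_norm, frob_eq_norm]
  have h : (WithLp.equiv 2 (Fin m × Fin n → ℝ)).symm (fun p => A p.1 p.2)
      = (WithLp.equiv 2 (Fin m × Fin n → ℝ)).symm (fun p => (A - Z) p.1 p.2)
        + (WithLp.equiv 2 (Fin m × Fin n → ℝ)).symm (fun p => Z p.1 p.2) := by
    rw [WithLp.equiv_symm_apply, ← WithLp.toLp_add]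
    congr 1
    funext p
    simp [Matrix.sub_apply]
  rw [h]
  exact norm_add_le _ _

lemma frob_le_sum_abs {n : ℕ} (Z : Matrix (Fin n) (Fin n) ℝ) :
    frob Z ≤ ∑ i, ∑ j, |Z i j| := by
  have h1 : ∑ i, ∑ j, (Z i j) ^ 2 ≤ (∑ i, ∑ j, |Z i j|) ^ 2 := by
    calc ∑ i, ∑ j, (Z i j) ^ 2 = ∑ p : Fin n × Fin n, |Z p.1 p.2| ^ 2 := by
          rw [Fintype.sum_prod_type]; exact Finset.sum_congr rfl fun i _ =>
            Finset.sum_congr rfl fun j _ => (sq_abs _).symm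
      _ ≤ (∑ p : Fin n × Fin n, |Z p.1 p.2|) ^ 2 := by
          refine Finset.sum_sq_le_sq_sum_of_nonneg fun p _ => abs_nonneg _
      _ = (∑ i, ∑ j, |Z i j|) ^ 2 := by rw [Fintype.sum_prod_type]
  calc frob Z ≤ Real.sqrt ((∑ i, ∑ j, |Z i j|) ^ 2) := Real.sqrt_le_sqrt h1
    _ = ∑ i, ∑ j, |Z i j| := Real.sqrt_sq (Finset.sum_nonneg fun i _ =>
        Finset.sum_nonneg fun j _ => abs_nonneg _)

lemma frob_orth {n k : ℕ} (H : Matrix (Fin k) (Fin n) ℝ) (h : H * Hᵀ = 1) :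
    frob H = Real.sqrt k := by
  rw [frob]
  congr 1
  have : ∑ i, ∑ j, (H i j) ^ 2 = trace (H * Hᵀ) := by
    simp only [Matrix.trace, Matrix.diag, Matrix.mul_apply, Matrix.transpose_apply]
    exact Finset.sum_congr rfl fun i _ => Finset.sum_congr rfl fun j _ => (sq (H i j)) ▸ rfl
  rw [this, h, Matrix.trace_one]
  simp

/-- All five terms of the objective are nonnegative at an orthonormally-constrained `H`. -/
lemma fObj_terms {n k d : ℕ} (X : Matrix (Fin d) (Fin n) ℝ)
    (W M C : Matrix (Fin n) (Fin n) ℝ) (lam lamZ lamM a1 a2 : ℝ)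
    (hlam : 0 < lam) (hlamZ : 0 < lamZ) (hlamM : 0 < lamM) (ha1 : 0 < a1) (ha2 : 0 < a2)
    (hCH : ∀ H : Matrix (Fin k) (Fin n) ℝ, H * Hᵀ = 1 → 0 < trace (H * lap C * Hᵀ))
    (A Z : Matrix (Fin n) (Fin n) ℝ) (H : Matrix (Fin k) (Fin n) ℝ) (hH : H * Hᵀ = 1) :
    lamZ * (∑ i, ∑ j, |Z i j|) ≤ fObj X W M C lam lamZ lamM a1 a2 A Z H ∧
    (lam / 2) * frob (A - Z) ^ 2 ≤ fObj X W M C lam lamZ lamM a1 a2 A Z H ∧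
    0 ≤ fObj X W M C lam lamZ lamM a1 a2 A Z H := by
  have h1 : (0:ℝ) ≤ (1 / 2) * frob (X - X * A) ^ 2 :=
    mul_nonneg (by norm_num) (sq_nonneg _)
  have h2 : (0:ℝ) ≤ (lam / 2) * frob (A - Z) ^ 2 :=
    mul_nonneg (by linarith) (sq_nonneg _)
  have h3 : (0:ℝ) ≤ lamZ * (∑ i, ∑ j, |Z i j|) :=
    mul_nonneg hlamZ.le (Finset.sum_nonneg fun i _ =>
      Finset.sum_nonneg fun j _ => abs_nonneg _)
  have hden := hCH H hH
  have h4 : (0:ℝ) ≤ a1 * trace (H * lap Z * Hᵀ) / trace (H * lap C * Hᵀ) :=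
    div_nonneg (mul_nonneg ha1.le (trace_lap_nonneg Z H)) hden.le
  have h5num : (0:ℝ) ≤ trace (H * (lap W + lamM • lap M) * Hᵀ) := by
    rw [Matrix.mul_add, Matrix.add_mul, Matrix.trace_add, Matrix.mul_smul,
      Matrix.smul_mul, Matrix.trace_smul]
    exact add_nonneg (trace_lap_nonneg W H)
      (smul_nonneg hlamM.le (trace_lap_nonneg M H))
  have h5 : (0:ℝ) ≤ a2 * trace (H * (lap W + lamM • lap M) * Hᵀ) / trace (H * lap C * Hᵀ) :=
    div_nonneg (mul_nonneg ha2.le h5num) hden.le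
  unfold fObj
  refine ⟨by linarith, by linarith, by linarith⟩

theorem dgsl_sequences_bounded (n k d : ℕ) (hn : 0 < n) (hk : 0 < k) (hd : 0 < d)
    (X : Matrix (Fin d) (Fin n) ℝ) (W M C : Matrix (Fin n) (Fin n) ℝ)
    (lam lamZ lamM a1 a2 : ℝ) (hlam : 0 < lam) (hlamZ : 0 < lamZ)
    (hlamM : 0 < lamM) (ha1 : 0 < a1) (ha2 : 0 < a2)
    (hC : ∀ H : Matrix (Fin k) (Fin n) ℝ, H * Hᵀ = 1 → 0 < trace (H * lap C * Hᵀ))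
    (Aseq Zseq : ℕ → Matrix (Fin n) (Fin n) ℝ)
    (Hseq : ℕ → Matrix (Fin k) (Fin n) ℝ)
    (hZ0 : ∀ i, Zseq 0 i i = 0) (hH0 : Hseq 0 * (Hseq 0)ᵀ = 1)
    (hHstep : ∀ t : ℕ, Hseq (t + 1) * (Hseq (t + 1))ᵀ = 1 ∧
      ∀ H : Matrix (Fin k) (Fin n) ℝ, H * Hᵀ = 1 →
        fObj X W M C lam lamZ lamM a1 a2 (Aseq t) (Zseq t) (Hseq (t + 1))
          ≤ fObj X W M C lam lamZ lamM a1 a2 (Aseq t) (Zseq t) H)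
    (hAstep : ∀ (t : ℕ) (A : Matrix (Fin n) (Fin n) ℝ),
      fObj X W M C lam lamZ lamM a1 a2 (Aseq (t + 1)) (Zseq t) (Hseq (t + 1))
        ≤ fObj X W M C lam lamZ lamM a1 a2 A (Zseq t) (Hseq (t + 1)))
    (hZstep : ∀ t : ℕ, (∀ i, Zseq (t + 1) i i = 0) ∧
      ∀ Z : Matrix (Fin n) (Fin n) ℝ, (∀ i, Z i i = 0) →
        fObj X W M C lam lamZ lamM a1 a2 (Aseq (t + 1)) (Zseq (t + 1)) (Hseq (t + 1))
          ≤ fObj X W M C lam lamZ lamM a1 a2 (Aseq (t + 1)) Z (Hseq (t + 1))) :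
    ∃ R : ℝ, 0 < R ∧ ∀ t : ℕ,
      frob (Aseq t) ≤ R ∧ frob (Zseq t) ≤ R ∧ frob (Hseq t) ≤ R := by
  set f : Matrix (Fin n) (Fin n) ℝ → Matrix (Fin n) (Fin n) ℝ →
      Matrix (Fin k) (Fin n) ℝ → ℝ := fun A Z H => fObj X W M C lam lamZ lamM a1 a2 A Z H
    with hf
  set F : ℝ := f (Aseq 0) (Zseq 0) (Hseq 0) with hFdef
  have key : ∀ t, (∀ i, Zseq t i i = 0) ∧ Hseq t * (Hseq t)ᵀ = 1 ∧
      f (Aseq t) (Zseq t) (Hseq t) ≤ F := by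
    intro t
    induction t with
    | zero => exact ⟨hZ0, hH0, le_refl _⟩
    | succ t ih =>
      refine ⟨(hZstep t).1, (hHstep t).1, ?_⟩
      calc f (Aseq (t + 1)) (Zseq (t + 1)) (Hseq (t + 1))
          ≤ f (Aseq (t + 1)) (Zseq t) (Hseq (t + 1)) := (hZstep t).2 (Zseq t) ih.1
        _ ≤ f (Aseq t) (Zseq t) (Hseq (t + 1)) := hAstep t (Aseq t)
        _ ≤ f (Aseq t) (Zseq t) (Hseq t) := (hHstep t).2 (Hseq t) ih.2.1
        _ ≤ F := ih.2.2
  have hF0 : 0 ≤ F :=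
    (fObj_terms X W M C lam lamZ lamM a1 a2 hlam hlamZ hlamM ha1 ha2 hC
      (Aseq 0) (Zseq 0) (Hseq 0) hH0).2.2
  refine ⟨Real.sqrt k + F / lamZ + Real.sqrt (2 * F / lam) + 1, ?_, ?_⟩
  · have e1 := Real.sqrt_nonneg (k : ℝ)
    have e2 := Real.sqrt_nonneg (2 * F / lam)
    have e3 : 0 ≤ F / lamZ := div_nonneg hF0 hlamZ.le
    linarith
  intro t
  obtain ⟨hZd, hHo, hfle⟩ := key t
  obtain ⟨hb1, hb2, _⟩ := fObj_terms X W M C lam lamZ lamM a1 a2 hlam hlamZ hlamM ha1 ha2 hC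
    (Aseq t) (Zseq t) (Hseq t) hHo
  have hZsum : ∑ i, ∑ j, |Zseq t i j| ≤ F / lamZ := by
    rw [le_div_iff₀ hlamZ]
    calc (∑ i, ∑ j, |Zseq t i j|) * lamZ = lamZ * ∑ i, ∑ j, |Zseq t i j| := by ring
      _ ≤ F := le_trans hb1 hfle
  have hZb : frob (Zseq t) ≤ F / lamZ := le_trans (frob_le_sum_abs _) hZsum
  have hAZ : frob (Aseq t - Zseq t) ≤ Real.sqrt (2 * F / lam) := by
    have hsq : frob (Aseq t - Zseq t) ^ 2 ≤ 2 * F / lam := by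
      rw [le_div_iff₀ hlam]
      have : (lam / 2) * frob (Aseq t - Zseq t) ^ 2 ≤ F := le_trans hb2 hfle
      nlinarith
    calc frob (Aseq t - Zseq t)
        = Real.sqrt (frob (Aseq t - Zseq t) ^ 2) := (Real.sqrt_sq (frob_nonneg _)).symm
      _ ≤ Real.sqrt (2 * F / lam) := Real.sqrt_le_sqrt hsq
  have hAb : frob (Aseq t) ≤ Real.sqrt (2 * F / lam) + F / lamZ :=
    le_trans (frob_triangle_sub _ _) (add_le_add hAZ hZb)
  have hHb : frob (Hseq t) = Real.sqrt k := frob_orth _ hHo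
  have h1 : (0:ℝ) ≤ Real.sqrt k := Real.sqrt_nonneg _
  have h2 : (0:ℝ) ≤ Real.sqrt (2 * F / lam) := Real.sqrt_nonneg _
  have h3 : (0:ℝ) ≤ F / lamZ := div_nonneg hF0 hlamZ.le
  exact ⟨by linarith, by linarith, by linarith [hHb.le]⟩
end
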